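/- arXiv:2004.00059 — 2 statements merged into one kernel-verified Lean document; each statement's English description precedes it below -/
import Mathlib

section
/- Suppose A ∈ ℝ^{n×n}, V ∈ ℝ^{n×sp} has F-orthonormal block columns spanning a subspace K of ℝ^{n×p}, and the Arnoldi-type relation A V = V (T ⊗ I_p) + W (τ E^T ⊗ I_p) holds where T = V^T ◇ (AV) ∈ ℝ^{s×s}, and W has block columns F-orthogonal to all V_i. If the polynomial relation P(A^j q) = V(T^j (V^T ◇ q) ⊗ I_p) holds for some block q ∈ ℝ^{n×p} with A^j q ∈ K, then it also holds for j+1, where P is the F-orthogonal projector onto K. -/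
open Matrix BigOperators

/-- Frobenius inner product `⟨X,Y⟩_F = trace(Yᵀ X)`. -/
noncomputable def finner {n p : ℕ} (X Y : Matrix (Fin n) (Fin p) ℝ) : ℝ :=
  Matrix.trace (Yᵀ * X)

/-- The F-orthogonal projection `P(X) = V((Vᵀ ◇ X) ⊗ I_p) = ∑ i, ⟨X, V i⟩_F • V i`. -/
noncomputable def Pproj {n p s : ℕ} (V : Fin s → Matrix (Fin n) (Fin p) ℝ)
    (X : Matrix (Fin n) (Fin p) ℝ) : Matrix (Fin n) (Fin p) ℝ :=
  ∑ i, finner X (V i) • V i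

lemma finner_add_left {n p : ℕ} (X Y Z : Matrix (Fin n) (Fin p) ℝ) :
    finner (X + Y) Z = finner X Z + finner Y Z := by
  simp [finner, Matrix.mul_add]

lemma finner_smul_left {n p : ℕ} (r : ℝ) (X Z : Matrix (Fin n) (Fin p) ℝ) :
    finner (r • X) Z = r * finner X Z := by
  simp [finner, Matrix.mul_smul]

lemma finner_sum_left {n p : ℕ} {ι : Type*} (t : Finset ι)
    (f : ι → Matrix (Fin n) (Fin p) ℝ) (Z : Matrix (Fin n) (Fin p) ℝ) :
    finner (∑ i ∈ t, f i) Z = ∑ i ∈ t, finner (f i) Z := by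
  simp [finner, Matrix.mul_sum]

lemma Pproj_add {n p s : ℕ} (V : Fin s → Matrix (Fin n) (Fin p) ℝ)
    (X Y : Matrix (Fin n) (Fin p) ℝ) :
    Pproj V (X + Y) = Pproj V X + Pproj V Y := by
  simp [Pproj, finner_add_left, add_smul, Finset.sum_add_distrib]

lemma Pproj_smul {n p s : ℕ} (V : Fin s → Matrix (Fin n) (Fin p) ℝ)
    (r : ℝ) (X : Matrix (Fin n) (Fin p) ℝ) :
    Pproj V (r • X) = r • Pproj V X := by
  simp [Pproj, finner_smul_left, mul_smul, Finset.smul_sum]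

lemma Pproj_sum {n p s : ℕ} (V : Fin s → Matrix (Fin n) (Fin p) ℝ)
    {ι : Type*} (t : Finset ι) (f : ι → Matrix (Fin n) (Fin p) ℝ) :
    Pproj V (∑ i ∈ t, f i) = ∑ i ∈ t, Pproj V (f i) := by
  classical
  induction t using Finset.induction_on with
  | empty => simp [Pproj, finner]
  | insert _ _ h ih => simp [Finset.sum_insert h, Pproj_add, ih]

lemma Pproj_self {n p s : ℕ} (V : Fin s → Matrix (Fin n) (Fin p) ℝ)
    (horth : ∀ i j, finner (V i) (V j) = if i = j then 1 else 0) (k : Fin s) :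
    Pproj V (V k) = V k := by
  simp [Pproj, horth]

lemma Pproj_mem {n p s : ℕ} (V : Fin s → Matrix (Fin n) (Fin p) ℝ)
    (horth : ∀ i j, finner (V i) (V j) = if i = j then 1 else 0)
    (X : Matrix (Fin n) (Fin p) ℝ) (hX : X ∈ Submodule.span ℝ (Set.range V)) :
    Pproj V X = X := by
  induction hX using Submodule.span_induction with
  | mem x hx => obtain ⟨k, rfl⟩ := hx; exact Pproj_self V horth k
  | zero => simp [Pproj, finner]
  | add x y _ _ hx hy => rw [Pproj_add, hx, hy]
  | smul r x _ hx => rw [Pproj_smul, hx]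

/-- inductive step of the exactness lemma.  Under the Arnoldi-type relation
`A V_j = ∑ i, T i j • V i + c j • W` with `T = Vᵀ ◇ (A V)` and `W` F-orthogonal to all
`V i`, if `A^j q` lies in the span of the block columns and
`P(A^j q) = V(T^j (Vᵀ ◇ q) ⊗ I_p)`, then the same identity holds for `j+1`. -/
theorem exactness_inductive_step {n p s : ℕ}
    (A : Matrix (Fin n) (Fin n) ℝ)
    (V : Fin s → Matrix (Fin n) (Fin p) ℝ)
    (horth : ∀ i j, finner (V i) (V j) = if i = j then 1 else 0)
    (T : Matrix (Fin s) (Fin s) ℝ)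
    (hT : ∀ i j, T i j = finner (A * V j) (V i))
    (W : Matrix (Fin n) (Fin p) ℝ)
    (hWorth : ∀ i, finner W (V i) = 0)
    (c : Fin s → ℝ)
    (hArnoldi : ∀ j, A * V j = (∑ i, T i j • V i) + c j • W)
    (q : Matrix (Fin n) (Fin p) ℝ) (j : ℕ)
    (hmem : (A ^ j * q) ∈ Submodule.span ℝ (Set.range V))
    (hind : Pproj V (A ^ j * q) = ∑ i, ((T ^ j).mulVec (fun i => finner q (V i))) i • V i) :
    Pproj V (A ^ (j + 1) * q) =
      ∑ i, ((T ^ (j + 1)).mulVec (fun i => finner q (V i))) i • V i := by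
  classical
  set w : Fin s → ℝ := fun i => finner q (V i) with hw
  set d : Fin s → ℝ := (T ^ j).mulVec w with hd
  have hself : A ^ j * q = ∑ i, d i • V i := by
    rw [← Pproj_mem V horth _ hmem, hind]
  have hPW : Pproj V W = 0 := by simp [Pproj, hWorth]
  have hPAV : ∀ i, Pproj V (A * V i) = ∑ k, T k i • V k := by
    intro i
    rw [hArnoldi i, Pproj_add, Pproj_sum, Pproj_smul, hPW, smul_zero, add_zero]
    simp [Pproj_smul, Pproj_self V horth]
  have hstep : A ^ (j + 1) * q = ∑ i, d i • (A * V i) := by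
    rw [pow_succ', Matrix.mul_assoc, hself, Matrix.mul_sum]
    simp [Matrix.mul_smul]
  rw [hstep, Pproj_sum]
  simp_rw [Pproj_smul, hPAV, Finset.smul_sum]
  rw [Finset.sum_comm]
  have : ∀ k : Fin s, ∑ i, d i • (T k i • V k) = ((T ^ (j + 1)).mulVec w) k • V k := by
    intro k
    have : (T ^ (j + 1)).mulVec w k = ∑ i, T k i * d i := by
      rw [pow_succ', ← Matrix.mulVec_mulVec, ← hd]
      simp [Matrix.mulVec, dotProduct]
    rw [this, Finset.sum_smul]
    exact Finset.sum_congr rfl fun i _ => by rw [smul_smul, mul_comm]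
  simp_rw [this]
end

section
/- Exactness of the global extended-rational Arnoldi approximation: under the hypotheses that the exactness identity P(A^j q_m(A)^{-1}V̂) = V(T^j (V^T◇(q_m(A)^{-1}V̂)) ⊗ I_p) holds for 0 ≤ j ≤ 2m and that A^j q_m(A)^{-1} V̂ lies in span{V_1,...,V_{2m}} for 0 ≤ j ≤ 2m−1, every rational function r(z) = p(z)/q_m(z) with deg p ≤ 2m−1 satisfies r(A)V̂ = ‖V̂‖_F · V(r(T) e_1 ⊗ I_p). -/
open Matrix BigOperators Polynomial

/-- Frobenius norm. -/
noncomputable def fnorm {n p : ℕ} (X : Matrix (Fin n) (Fin p) ℝ) : ℝ :=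
  Real.sqrt (finner X X)

/-- exactness of the global extended-rational Arnoldi approximation:
for every rational function `r(z) = pol(z)/q_m(z)` with `deg pol ≤ 2m−1`,
`r(A) V̂ = ‖V̂‖_F · V(r(T) e₁ ⊗ I_p)`. -/
theorem rational_exactness {n p m : ℕ} (hm : 0 < m)
    (A : Matrix (Fin n) (Fin n) ℝ) (ss : Fin m → ℝ)
    (T : Matrix (Fin (2 * m)) (Fin (2 * m)) ℝ)
    (hAinv : IsUnit ((List.ofFn fun i : Fin m => A - ss i • 1).prod))
    (hTinv : IsUnit ((List.ofFn fun i : Fin m => T - ss i • 1).prod))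
    (V : Fin (2 * m) → Matrix (Fin n) (Fin p) ℝ)
    (horth : ∀ i j, finner (V i) (V j) = if i = j then 1 else 0)
    (hT : ∀ i j, T i j = finner (A * V j) (V i))
    (Vhat : Matrix (Fin n) (Fin p) ℝ) (hVhat : Vhat ≠ 0)
    (hV1 : V ⟨0, by omega⟩ = (fnorm Vhat)⁻¹ • Vhat)
    (q : Matrix (Fin n) (Fin p) ℝ)
    (hq : q = ((List.ofFn fun i : Fin m => A - ss i • 1).prod)⁻¹ * Vhat)
    (hmemj : ∀ j ≤ 2 * m - 1, (A ^ j * q) ∈ Submodule.span ℝ (Set.range V))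
    (hexact : ∀ j ≤ 2 * m,
      Pproj V (A ^ j * q) = ∑ i, ((T ^ j).mulVec (fun i => finner q (V i))) i • V i)
    (pol : Polynomial ℝ) (hpol : pol.natDegree ≤ 2 * m - 1) :
    (Polynomial.aeval A pol) * ((List.ofFn fun i : Fin m => A - ss i • 1).prod)⁻¹ * Vhat =
      fnorm Vhat •
        ∑ i, (((Polynomial.aeval T pol) *
            ((List.ofFn fun i : Fin m => T - ss i • 1).prod)⁻¹).mulVec
              (Pi.single ⟨0, by omega⟩ 1)) i • V i := by

  classical
  set e0 : Fin (2 * m) := ⟨0, by omega⟩ with he0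
  set qA : Matrix (Fin n) (Fin n) ℝ := (List.ofFn fun i : Fin m => A - ss i • 1).prod with hqA
  set qT : Matrix (Fin (2 * m)) (Fin (2 * m)) ℝ :=
    (List.ofFn fun i : Fin m => T - ss i • 1).prod with hqT
  set c : Fin (2 * m) → ℝ := fun i => finner q (V i) with hc
  -- basic linearity facts
  have fsmul : ∀ (a : ℝ) (X Y : Matrix (Fin n) (Fin p) ℝ),
      finner (a • X) Y = a * finner X Y := by
    intro a X Y; simp [finner, Matrix.mul_smul, smul_eq_mul]
  have fsum : ∀ {ι : Type} (s : Finset ι) (f : ι → Matrix (Fin n) (Fin p) ℝ)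
      (Y : Matrix (Fin n) (Fin p) ℝ),
      finner (∑ i ∈ s, f i) Y = ∑ i ∈ s, finner (f i) Y := by
    intro ι s f Y; simp [finner, Matrix.mul_sum]
  have fadd : ∀ (X X' Y : Matrix (Fin n) (Fin p) ℝ),
      finner (X + X') Y = finner X Y + finner X' Y := by
    intro X X' Y; simp [finner, Matrix.mul_add]
  -- coefficient extraction
  have extract : ∀ (a : Fin (2 * m) → ℝ) (j : Fin (2 * m)),
      finner (∑ i, a i • V i) (V j) = a j := by
    intro a j
    rw [fsum]
    have : ∀ i, finner (a i • V i) (V j) = if i = j then a i else 0 := by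
      intro i; rw [fsmul, horth]; by_cases h : i = j <;> simp [h]
    simp only [this]
    simp
  -- projection fixes elements of the span
  have Pproj_smul : ∀ (a : ℝ) (X : Matrix (Fin n) (Fin p) ℝ),
      Pproj V (a • X) = a • Pproj V X := by
    intro a X
    simp only [Pproj, fsmul, Finset.smul_sum, smul_smul]
  have Pproj_add : ∀ (X Y : Matrix (Fin n) (Fin p) ℝ),
      Pproj V (X + Y) = Pproj V X + Pproj V Y := by
    intro X Y
    simp only [Pproj, fadd, add_smul, Finset.sum_add_distrib]
  have proj_id : ∀ X ∈ Submodule.span ℝ (Set.range V), Pproj V X = X := by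
    intro X hX
    induction hX using Submodule.span_induction with
    | mem x hx =>
      obtain ⟨j, rfl⟩ := hx
      simp only [Pproj, horth]
      rw [Finset.sum_eq_single j]
      · simp
      · intro b _ hb; simp [Ne.symm hb]
      · intro h; simp at h
    | zero =>
      simp only [Pproj]
      have : ∀ i : Fin (2 * m), finner (0 : Matrix (Fin n) (Fin p) ℝ) (V i) • V i = 0 := by
        intro i
        have : finner (0 : Matrix (Fin n) (Fin p) ℝ) (V i) = 0 := by simp [finner]
        simp [this]
      simp [this]
    | add x y _ _ hx hy => rw [Pproj_add, hx, hy]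
    | smul a x _ hx => rw [Pproj_smul, hx]
  -- sum of smul mulVec
  have mulVec_sum : ∀ {ι : Type} (s : Finset ι)
      (M : ι → Matrix (Fin (2 * m)) (Fin (2 * m)) ℝ) (v : Fin (2 * m) → ℝ),
      (∑ k ∈ s, M k).mulVec v = ∑ k ∈ s, (M k).mulVec v := by
    intro ι s M v
    induction s using Finset.induction with
    | empty => simp [Matrix.zero_mulVec]
    | @insert a s h ih => simp [Finset.sum_insert h, Matrix.add_mulVec, ih]
  -- KEY: polynomial version of hexact
  have key : ∀ P : ℝ[X], P.natDegree ≤ 2 * m →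
      Pproj V ((aeval A P) * q) = ∑ i, ((aeval T P).mulVec c) i • V i := by
    intro P hP
    rw [Polynomial.aeval_eq_sum_range (x := A), Polynomial.aeval_eq_sum_range (x := T)]
    rw [Matrix.sum_mul]
    have h1 : ∀ k ∈ Finset.range (P.natDegree + 1),
        (P.coeff k • A ^ k) * q = P.coeff k • (A ^ k * q) := by
      intro k _; rw [Matrix.smul_mul]
    rw [Finset.sum_congr rfl h1]
    have h2 : Pproj V (∑ k ∈ Finset.range (P.natDegree + 1), P.coeff k • (A ^ k * q)) =
        ∑ k ∈ Finset.range (P.natDegree + 1), P.coeff k • Pproj V (A ^ k * q) := by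
      simp only [Pproj, fsum, fsmul, Finset.smul_sum, smul_smul]
      rw [Finset.sum_comm]
      congr 1; funext i; rw [Finset.sum_smul]
    rw [h2]
    have h3 : ∀ k ∈ Finset.range (P.natDegree + 1),
        P.coeff k • Pproj V (A ^ k * q) =
          ∑ i, (P.coeff k • ((T ^ k).mulVec c)) i • V i := by
      intro k hk
      rw [hexact k (by
        have := Finset.mem_range.mp hk
        omega)]
      rw [Finset.smul_sum]
      congr 1; funext i
      simp [smul_smul]
    rw [Finset.sum_congr rfl h3, Finset.sum_comm]
    congr 1; funext i
    rw [mulVec_sum, Finset.sum_apply, Finset.sum_smul]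
    refine Finset.sum_congr rfl fun k _ => ?_
    rw [Matrix.smul_mulVec]
  -- qA, qT are aeval of the polynomial Q
  set Q : ℝ[X] := (List.ofFn fun i : Fin m => (X : ℝ[X]) - C (ss i)).prod with hQ
  have haevalQ : ∀ {N : ℕ} (B : Matrix (Fin N) (Fin N) ℝ),
      aeval B Q = (List.ofFn fun i : Fin m => B - ss i • 1).prod := by
    intro N B
    rw [hQ, map_list_prod, List.map_ofFn]
    have hfun : (⇑(aeval B) ∘ fun i : Fin m => (X : ℝ[X]) - C (ss i)) =
        fun i : Fin m => B - ss i • 1 := by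
      funext i; simp [Function.comp, Algebra.algebraMap_eq_smul_one]
    rw [hfun]
  have hQdeg : Q.natDegree ≤ m := by
    calc Q.natDegree ≤ ((List.ofFn fun i : Fin m => (X : ℝ[X]) - C (ss i)).map
        Polynomial.natDegree).sum := Polynomial.natDegree_list_prod_le _
    _ ≤ m := by
        rw [List.map_ofFn]
        have hfun : (Polynomial.natDegree ∘ fun i : Fin m =>
            (X : ℝ[X]) - C (ss i)) = fun _ : Fin m => 1 := by
          funext i; simp [Function.comp, Polynomial.natDegree_X_sub_C]
        rw [hfun]
        simp
  -- determinants are units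
  have hAdet : IsUnit qA.det := (Matrix.isUnit_iff_isUnit_det _).mp hAinv
  have hTdet : IsUnit qT.det := (Matrix.isUnit_iff_isUnit_det _).mp hTinv
  -- fnorm Vhat ≠ 0
  have hfn : fnorm Vhat ≠ 0 := by
    intro h
    have h0 : V e0 = 0 := by rw [hV1, h]; simp
    have := horth e0 e0
    rw [h0] at this
    simp [finner] at this
  -- Vhat = fnorm Vhat • V e0
  have hVhat' : Vhat = fnorm Vhat • V e0 := by
    rw [hV1, smul_smul, mul_inv_cancel₀ hfn, one_smul]
  -- qA * q = Vhat
  have hqAq : (aeval A Q) * q = Vhat := by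
    rw [haevalQ, ← hqA, hq, ← Matrix.mul_assoc, Matrix.mul_nonsing_inv _ hAdet, Matrix.one_mul]
  -- qT.mulVec c = fnorm Vhat • Pi.single e0 1
  have hmv : qT.mulVec c = (fnorm Vhat) • (Pi.single e0 1 : Fin (2 * m) → ℝ) := by
    funext j
    have h1 := key Q (hQdeg.trans (by omega))
    rw [hqAq] at h1
    have h2 : finner Vhat (V j) = ((aeval T Q).mulVec c) j := by
      have := congrArg (fun X => finner X (V j)) h1
      simpa [Pproj, extract] using this
    have h3 : finner Vhat (V j) = fnorm Vhat * (if e0 = j then 1 else 0) := by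
      conv_lhs => rw [hVhat']
      rw [fsmul, horth]
    rw [haevalQ, ← hqT] at h2
    rw [← h2, h3]
    rcases eq_or_ne e0 j with h | h
    · simp [h, Pi.single_apply]
    · simp [h, Pi.single_apply, Ne.symm h]
  -- c = fnorm Vhat • qT⁻¹.mulVec e₁
  have hcval : c = (fnorm Vhat) • qT⁻¹.mulVec (Pi.single e0 1 : Fin (2 * m) → ℝ) := by
    have : qT⁻¹.mulVec (qT.mulVec c) = c := by
      rw [Matrix.mulVec_mulVec, Matrix.nonsing_inv_mul _ hTdet, Matrix.one_mulVec]
    rw [← this, hmv, Matrix.mulVec_smul]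
  -- membership of aeval A pol * q in span V
  have hmem : (aeval A pol) * q ∈ Submodule.span ℝ (Set.range V) := by
    rw [Polynomial.aeval_eq_sum_range (x := A), Matrix.sum_mul]
    refine Submodule.sum_mem _ ?_
    intro k hk
    rw [Matrix.smul_mul]
    refine Submodule.smul_mem _ _ (hmemj k ?_)
    have hk' := Finset.mem_range.mp hk
    omega
  -- final assembly
  rw [Matrix.mul_assoc, ← hq]
  rw [← proj_id _ hmem, key pol (by omega)]
  rw [hcval]
  rw [Finset.smul_sum]
  congr 1; funext i
  rw [Matrix.mulVec_smul, Matrix.mulVec_mulVec]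
  simp [smul_smul]
end
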